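/- Let 0 < q < 1/2, p = 1 - q, s = 4pq. For every real z > 1: √(z/(z+1/2)) · s^z/√(πz) ≤ I_s(z, 1/2) ≤ (1/√(1-s)) · s^z/√(πz). -/

import Mathlib

open Real

/-- Regularized incomplete beta function. -/
noncomputable def regIncBeta (x a b : ℝ) : ℝ :=
  (Real.Gamma (a + b) / (Real.Gamma a * Real.Gamma b)) *
    ∫ t in (0:ℝ)..x, t ^ (a - 1) * (1 - t) ^ (b - 1)

lemma gamma_ratio_upper {z : ℝ} (hz : 0 < z) :
    Real.Gamma (z + 1/2) ≤ Real.sqrt z * Real.Gamma z := by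
  have h := Real.Gamma_mul_add_mul_le_rpow_Gamma_mul_rpow_Gamma
    (s := z) (t := z + 1) (a := 1/2) (b := 1/2) hz (by linarith) (by norm_num)
    (by norm_num) (by norm_num)
  have h2 : (1/2 : ℝ) * z + (1/2 : ℝ) * (z + 1) = z + 1/2 := by ring
  rw [h2, Real.Gamma_add_one hz.ne'] at h
  have hg : 0 < Real.Gamma z := Real.Gamma_pos_of_pos hz
  calc Real.Gamma (z + 1/2)
      ≤ Real.Gamma z ^ ((1:ℝ)/2) * (z * Real.Gamma z) ^ ((1:ℝ)/2) := h
    _ = Real.sqrt z * Real.Gamma z := by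
        rw [← Real.sqrt_eq_rpow, ← Real.sqrt_eq_rpow, Real.sqrt_mul hz.le]
        linear_combination Real.sqrt z * Real.mul_self_sqrt hg.le

lemma gamma_ratio_lower {z : ℝ} (hz : 0 < z) :
    z * Real.Gamma z ≤ Real.sqrt (z + 1/2) * Real.Gamma (z + 1/2) := by
  have h := Real.Gamma_mul_add_mul_le_rpow_Gamma_mul_rpow_Gamma
    (s := z + 1/2) (t := z + 3/2) (a := 1/2) (b := 1/2) (by linarith) (by linarith)
    (by norm_num) (by norm_num) (by norm_num)
  have h2 : (1/2 : ℝ) * (z + 1/2) + (1/2 : ℝ) * (z + 3/2) = z + 1 := by ring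
  have h3 : z + 3/2 = (z + 1/2) + 1 := by ring
  rw [h2, h3, Real.Gamma_add_one (show z + 1/2 ≠ 0 by positivity),
    Real.Gamma_add_one hz.ne'] at h
  have hg : 0 < Real.Gamma (z + 1/2) := Real.Gamma_pos_of_pos (by positivity)
  calc z * Real.Gamma z
      ≤ Real.Gamma (z + 1/2) ^ ((1:ℝ)/2) * ((z + 1/2) * Real.Gamma (z + 1/2)) ^ ((1:ℝ)/2) := h
    _ = Real.sqrt (z + 1/2) * Real.Gamma (z + 1/2) := by
        rw [← Real.sqrt_eq_rpow, ← Real.sqrt_eq_rpow, Real.sqrt_mul (by positivity)]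
        linear_combination Real.sqrt (z + 1/2) * Real.mul_self_sqrt hg.le

theorem stmt15 (q : ℝ) (hq0 : 0 < q) (hq1 : q < 1/2) (p s : ℝ)
    (hp : p = 1 - q) (hs : s = 4 * p * q) (z : ℝ) (hz : 1 < z) :
    Real.sqrt (z / (z + 1/2)) * (s ^ z / Real.sqrt (π * z)) ≤ regIncBeta s z (1/2)
    ∧ regIncBeta s z (1/2) ≤ (1 / Real.sqrt (1 - s)) * (s ^ z / Real.sqrt (π * z)) := by
  have hz0 : (0:ℝ) < z := by linarith
  have hs0 : 0 < s := by rw [hs, hp]; nlinarith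
  have hs1 : s < 1 := by rw [hs, hp]; nlinarith [sq_nonneg (1 - 2*q)]
  have h1s : 0 < 1 - s := by linarith
  -- continuity/integrability facts on [0, s]
  have hcont1 : ContinuousOn (fun t : ℝ => t ^ (z - 1)) (Set.Icc 0 s) := by
    apply ContinuousOn.rpow_const continuousOn_id
    intro x _; right; linarith
  have hcont2 : ContinuousOn (fun t : ℝ => (1 - t) ^ ((1:ℝ)/2 - 1)) (Set.Icc 0 s) := by
    apply ContinuousOn.rpow_const (continuousOn_const.sub continuousOn_id)
    intro x hx; left
    have := hx.2
    intro h; simp only [Pi.sub_apply, id] at h; nlinarith [hx.2]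
  have hcontf : ContinuousOn (fun t : ℝ => t ^ (z - 1) * (1 - t) ^ ((1:ℝ)/2 - 1))
      (Set.Icc 0 s) := hcont1.mul hcont2
  have huIcc : Set.uIcc (0:ℝ) s = Set.Icc 0 s := Set.uIcc_of_le hs0.le
  have hintf : IntervalIntegrable (fun t : ℝ => t ^ (z - 1) * (1 - t) ^ ((1:ℝ)/2 - 1))
      MeasureTheory.volume 0 s := (huIcc ▸ hcontf).intervalIntegrable
  have hint1 : IntervalIntegrable (fun t : ℝ => t ^ (z - 1)) MeasureTheory.volume 0 s :=
    (huIcc ▸ hcont1).intervalIntegrable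
  have hint2 : IntervalIntegrable (fun t : ℝ => t ^ (z - 1) * (1 - s) ^ ((1:ℝ)/2 - 1))
      MeasureTheory.volume 0 s :=
    ((huIcc ▸ hcont1).mul continuousOn_const).intervalIntegrable
  -- value of the pure power integral
  have hpow : (∫ t in (0:ℝ)..s, t ^ (z - 1)) = s ^ z / z := by
    rw [integral_rpow (Or.inl (by linarith))]
    rw [Real.zero_rpow (by intro h; nlinarith : z - 1 + 1 ≠ 0)]
    rw [show z - 1 + 1 = z by ring]
    ring
  -- pointwise bounds
  have hlowI : s ^ z / z ≤ ∫ t in (0:ℝ)..s, t ^ (z - 1) * (1 - t) ^ ((1:ℝ)/2 - 1) := by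
    rw [← hpow]
    apply intervalIntegral.integral_mono_on hs0.le hint1 hintf
    intro x hx
    have hx0 := hx.1
    have h1x : 0 < 1 - x := by nlinarith [hx.2]
    have hge1 : (1:ℝ) ≤ (1 - x) ^ ((1:ℝ)/2 - 1) := by
      have := Real.rpow_le_rpow_of_nonpos h1x (by linarith : 1 - x ≤ 1)
        (by norm_num : (1:ℝ)/2 - 1 ≤ 0)
      rwa [Real.one_rpow] at this
    nlinarith [Real.rpow_nonneg hx0 (z - 1)]
  have hupI : (∫ t in (0:ℝ)..s, t ^ (z - 1) * (1 - t) ^ ((1:ℝ)/2 - 1))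
      ≤ s ^ z / z * (1 - s) ^ ((1:ℝ)/2 - 1) := by
    have : (∫ t in (0:ℝ)..s, t ^ (z - 1) * (1 - s) ^ ((1:ℝ)/2 - 1))
        = s ^ z / z * (1 - s) ^ ((1:ℝ)/2 - 1) := by
      rw [intervalIntegral.integral_mul_const, hpow]
    rw [← this]
    apply intervalIntegral.integral_mono_on hs0.le hintf hint2
    intro x hx
    have h1x : 0 < 1 - x := by nlinarith [hx.2]
    have hc : (1 - x) ^ ((1:ℝ)/2 - 1) ≤ (1 - s) ^ ((1:ℝ)/2 - 1) :=
      Real.rpow_le_rpow_of_nonpos h1s (by linarith [hx.2]) (by norm_num)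
    exact mul_le_mul_of_nonneg_left hc (Real.rpow_nonneg hx.1 _)
  -- notation
  set G := Real.Gamma z with hG
  set H := Real.Gamma (z + 1/2) with hH
  set I := ∫ t in (0:ℝ)..s, t ^ (z - 1) * (1 - t) ^ ((1:ℝ)/2 - 1) with hI
  have hGpos : 0 < G := Real.Gamma_pos_of_pos hz0
  have hHpos : 0 < H := Real.Gamma_pos_of_pos (by positivity)
  have hSpos : 0 < s ^ z := Real.rpow_pos_of_pos hs0 z
  have hreg : regIncBeta s z (1/2) = H / (G * Real.sqrt π) * I := by
    rw [regIncBeta, Real.Gamma_one_half_eq]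
  have hA : Real.sqrt (z + 1/2) > 0 := Real.sqrt_pos.mpr (by positivity)
  have hB : Real.sqrt z > 0 := Real.sqrt_pos.mpr hz0
  have hP : Real.sqrt π > 0 := Real.sqrt_pos.mpr Real.pi_pos
  have hA2 : Real.sqrt (z + 1/2) * Real.sqrt (z + 1/2) = z + 1/2 :=
    Real.mul_self_sqrt (by positivity)
  have hB2 : Real.sqrt z * Real.sqrt z = z := Real.mul_self_sqrt hz0.le
  have hsqdiv : Real.sqrt (z / (z + 1/2)) = Real.sqrt z / Real.sqrt (z + 1/2) :=
    Real.sqrt_div hz0.le _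
  have hsqmul : Real.sqrt (π * z) = Real.sqrt π * Real.sqrt z :=
    Real.sqrt_mul Real.pi_pos.le z
  have hCpos : 0 < H / (G * Real.sqrt π) := by positivity
  have hglow : z * G ≤ Real.sqrt (z + 1/2) * H := gamma_ratio_lower hz0
  have hgup : H ≤ Real.sqrt z * G := gamma_ratio_upper hz0
  clear_value G H I
  constructor
  · rw [hreg, hsqdiv, hsqmul]
    calc Real.sqrt z / Real.sqrt (z + 1/2) * (s ^ z / (Real.sqrt π * Real.sqrt z))
        = s ^ z / (Real.sqrt (z + 1/2) * Real.sqrt π) := by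
          field_simp
      _ ≤ H / (G * Real.sqrt π) * (s ^ z / z) := by
          rw [show H / (G * Real.sqrt π) * (s ^ z / z)
              = H * s ^ z / (G * Real.sqrt π * z) by field_simp]
          rw [div_le_div_iff₀ (by positivity) (by positivity)]
          have h := mul_le_mul_of_nonneg_left hglow
            (by positivity : (0:ℝ) ≤ s ^ z * Real.sqrt π)
          nlinarith [hGpos, hSpos, hP, hB, hA]
      _ ≤ H / (G * Real.sqrt π) * I :=
          mul_le_mul_of_nonneg_left hlowI hCpos.le
  · rw [hreg, hsqmul]
    have hrs : (1 - s) ^ ((1:ℝ)/2 - 1) = 1 / Real.sqrt (1 - s) := by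
      rw [show (1:ℝ)/2 - 1 = -(1/2) by norm_num, Real.rpow_neg h1s.le,
        ← Real.sqrt_eq_rpow, one_div]
    have hQ : 0 < Real.sqrt (1 - s) := Real.sqrt_pos.mpr h1s
    calc H / (G * Real.sqrt π) * I
        ≤ H / (G * Real.sqrt π) * (s ^ z / z * (1 - s) ^ ((1:ℝ)/2 - 1)) := by
          exact mul_le_mul_of_nonneg_left hupI hCpos.le
      _ ≤ 1 / Real.sqrt (1 - s) * (s ^ z / (Real.sqrt π * Real.sqrt z)) := by
          rw [hrs]
          rw [show H / (G * Real.sqrt π) * (s ^ z / z * (1 / Real.sqrt (1 - s)))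
              = (H * s ^ z) / (G * Real.sqrt π * z * Real.sqrt (1 - s)) by
            field_simp]
          rw [show (1:ℝ) / Real.sqrt (1 - s) * (s ^ z / (Real.sqrt π * Real.sqrt z))
              = s ^ z / (Real.sqrt (1 - s) * Real.sqrt π * Real.sqrt z) by
            rw [div_mul_div_comm, one_mul, mul_assoc]]
          rw [div_le_div_iff₀ (by positivity) (by positivity)]
          have hgup2 : H * Real.sqrt z ≤ z * G := by
            calc H * Real.sqrt z ≤ Real.sqrt z * G * Real.sqrt z :=
                  mul_le_mul_of_nonneg_right hgup hB.le
              _ = z * G := by rw [mul_right_comm, hB2]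
          calc H * s ^ z * (Real.sqrt (1 - s) * Real.sqrt π * Real.sqrt z)
              = s ^ z * Real.sqrt π * Real.sqrt (1 - s) * (H * Real.sqrt z) := by ring
            _ ≤ s ^ z * Real.sqrt π * Real.sqrt (1 - s) * (z * G) :=
                mul_le_mul_of_nonneg_left hgup2 (by positivity)
            _ = s ^ z * (G * Real.sqrt π * z * Real.sqrt (1 - s)) := by ring
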